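/- For every positive integer n, the number of partitions of n into distinct parts equals the number of partitions of n+1 whose largest part is even and in which all parts not exceeding half of the largest part are distinct. -/

import Mathlib

namespace AKY

/-- 2-adic valuation -/
def v2 (p : ℕ) : ℕ := p.factorization 2
/-- odd part -/
def oc (p : ℕ) : ℕ := p / 2 ^ v2 p

lemma oc_odd {p : ℕ} (hp : p ≠ 0) : Odd (oc p) := by
  have := Nat.not_dvd_ordCompl Nat.prime_two hp
  rw [Nat.odd_iff, Nat.two_dvd_ne_zero.symm] at *
  simpa [oc, v2] using this

lemma oc_pos {p : ℕ} (hp : p ≠ 0) : 0 < oc p := Nat.ordCompl_pos 2 hp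

lemma oc_le (p : ℕ) : oc p ≤ p := Nat.ordCompl_le p 2

lemma pow_v2_mul_oc {p : ℕ} (hp : p ≠ 0) : 2 ^ v2 p * oc p = p :=
  Nat.ordProj_mul_ordCompl_eq_self p 2

lemma v2_pow_mul {v : ℕ} (i : ℕ) (hv : Odd v) : v2 (2 ^ i * v) = i := by
  have hv2 : ¬ 2 ∣ v := by rw [Nat.odd_iff, Nat.two_dvd_ne_zero.symm] at hv; exact hv
  have hv0 : v ≠ 0 := by rintro rfl; simp at hv
  rw [v2, Nat.factorization_mul (by positivity) hv0]
  simp [Nat.Prime.factorization_pow, Nat.factorization_eq_zero_of_not_dvd hv2,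
    Nat.Prime.factorization_self Nat.prime_two]

lemma oc_pow_mul {v : ℕ} (i : ℕ) (hv : Odd v) : oc (2 ^ i * v) = v := by
  have hv0 : v ≠ 0 := by rintro rfl; simp at hv
  rw [oc, v2_pow_mul i hv, Nat.mul_div_cancel_left _ (by positivity)]

/-- Glaisher split: replace each part `p = 2^a * v` (v odd) by `2^a` copies of `v`. -/
def splitM (s : Multiset ℕ) : Multiset ℕ :=
  s.bind fun p => Multiset.replicate (2 ^ v2 p) (oc p)

def mergeCount (T : ℕ) (o : Multiset ℕ) (m : ℕ) : ℕ :=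
  if m = 0 then 0 else if m ≤ T then (o.count (oc m) / 2 ^ v2 m) % 2
  else if m ≤ 2*T then o.count (oc m) / 2 ^ v2 m else 0

/-- Glaisher merge with threshold: parts `≤ T` get binary digits, parts in `(T, 2T]`
get the remaining quotient. -/
def mergeM (T : ℕ) (o : Multiset ℕ) : Multiset ℕ :=
  ∑ m ∈ Finset.range (2*T+1), Multiset.replicate (mergeCount T o m) m

lemma splitM_cons (p : ℕ) (s : Multiset ℕ) :
    splitM (p ::ₘ s) = Multiset.replicate (2 ^ v2 p) (oc p) + splitM s := by
  simp [splitM]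

lemma sum_splitM (s : Multiset ℕ) (h : ∀ p ∈ s, 0 < p) : (splitM s).sum = s.sum := by
  induction s using Multiset.induction with
  | empty => simp [splitM]
  | cons p t ih =>
    rw [splitM_cons, Multiset.sum_add, Multiset.sum_cons,
      ih (fun q hq => h q (Multiset.mem_cons_of_mem hq)), Multiset.sum_replicate, smul_eq_mul,
      pow_v2_mul_oc (Nat.pos_iff_ne_zero.1 (h p (Multiset.mem_cons_self p t)))]

lemma mem_splitM {q : ℕ} {s : Multiset ℕ} (h : q ∈ splitM s) : ∃ p ∈ s, q = oc p := by
  rw [splitM, Multiset.mem_bind] at h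
  obtain ⟨p, hp, hq⟩ := h
  exact ⟨p, hp, (Multiset.eq_of_mem_replicate hq)⟩

lemma count_splitM (s : Multiset ℕ) {v : ℕ} (hv : Odd v) (K : ℕ)
    (hK : ∀ p ∈ s, p < 2 ^ K * v) :
    (splitM s).count v = ∑ i ∈ Finset.range K, 2 ^ i * s.count (2 ^ i * v) := by
  have hv0 : v ≠ 0 := by rintro rfl; simp at hv
  induction s using Multiset.induction with
  | empty => simp [splitM]
  | cons p t ih =>
    have hK' : ∀ q ∈ t, q < 2 ^ K * v := fun q hq => hK q (Multiset.mem_cons_of_mem hq)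
    rw [splitM_cons, Multiset.count_add, ih hK', Multiset.count_replicate]
    have hcnt : ∀ i, (p ::ₘ t).count (2 ^ i * v) = t.count (2 ^ i * v)
        + if 2 ^ i * v = p then 1 else 0 := by
      intro i
      rw [Multiset.count_cons]
    have : ∑ i ∈ Finset.range K, 2 ^ i * (p ::ₘ t).count (2 ^ i * v)
        = (∑ i ∈ Finset.range K, 2 ^ i * t.count (2 ^ i * v))
          + ∑ i ∈ Finset.range K, (if 2 ^ i * v = p then 2 ^ i else 0) := by
      rw [← Finset.sum_add_distrib]
      refine Finset.sum_congr rfl fun i _ => ?_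
      rw [hcnt i, Nat.mul_add]
      congr 1
      split <;> simp
    rw [this]
    have hsum : ∑ i ∈ Finset.range K, (if 2 ^ i * v = p then 2 ^ i else 0)
        = if oc p = v then 2 ^ v2 p else 0 := by
      by_cases hvp : oc p = v
      · have hp0 : p ≠ 0 := by
          rintro rfl
          simp [oc, v2] at hvp
          omega
        have hpv : 2 ^ v2 p * v = p := by rw [← hvp]; exact pow_v2_mul_oc hp0
        have hlt : v2 p < K := by
          by_contra hcon
          push_neg at hcon
          have h1 : 2 ^ K * v ≤ 2 ^ v2 p * v :=
            Nat.mul_le_mul_right v (Nat.pow_le_pow_right (by norm_num) hcon)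
          have h2 := hK p (Multiset.mem_cons_self p t)
          omega
        rw [if_pos hvp, Finset.sum_eq_single (v2 p)]
        · rw [if_pos hpv]
        · intro i _ hne
          rw [if_neg]
          intro hip
          apply hne
          rw [← hip, v2_pow_mul i hv]
        · intro habs
          exact absurd (Finset.mem_range.2 hlt) habs
      · rw [if_neg hvp]
        refine Finset.sum_eq_zero fun i _ => ?_
        rw [if_neg]
        intro hip
        exact hvp (by rw [← hip, oc_pow_mul i hv])
    rw [hsum]
    omega

lemma count_mergeM (T : ℕ) (o : Multiset ℕ) (m : ℕ) :
    (mergeM T o).count m = mergeCount T o m := by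
  rw [mergeM, Multiset.count_sum']
  by_cases hm : m ∈ Finset.range (2*T+1)
  · rw [Finset.sum_eq_single m]
    · simp [Multiset.count_replicate]
    · intro b _ hne
      simp [Multiset.count_replicate, hne]
    · exact fun h => absurd hm h
  · have h1 : ∀ b ∈ Finset.range (2*T+1), (Multiset.replicate (mergeCount T o b) b).count m = 0 := by
      intro b hb
      rw [Multiset.count_replicate, if_neg]
      rintro rfl
      exact hm hb
    rw [Finset.sum_congr rfl h1, Finset.sum_const, smul_zero]
    rw [Finset.mem_range] at hm
    push_neg at hm
    rw [mergeCount, if_neg (by omega), if_neg (by omega), if_neg (by omega)]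

lemma sum_bits (a c : ℕ) :
    ∑ i ∈ Finset.range a, 2 ^ i * (c / 2 ^ i % 2) = c % 2 ^ a := by
  induction a with
  | zero => simp [Nat.mod_one]
  | succ a ih => rw [Finset.sum_range_succ, ih, Nat.mod_pow_succ]

lemma mergeCount_ne_zero {T : ℕ} {o : Multiset ℕ} {m : ℕ} (h : mergeCount T o m ≠ 0) :
    1 ≤ m ∧ m ≤ 2*T := by
  rw [mergeCount] at h
  split_ifs at h with h1 h2 h3 <;> omega

lemma mem_mergeM_bound {T : ℕ} {o : Multiset ℕ} {m : ℕ} (h : m ∈ mergeM T o) :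
    1 ≤ m ∧ m ≤ 2*T := by
  rw [← Multiset.count_pos, count_mergeM] at h
  exact mergeCount_ne_zero h.ne'

lemma exists_thresh {v : ℕ} (T : ℕ) (hv0 : 0 < v) : ∃ i, T < 2 ^ i * v := by
  refine ⟨T + 1, ?_⟩
  have h1 : T + 1 < 2 ^ (T+1) := Nat.lt_two_pow_self
  have h2 : 2 ^ (T+1) * 1 ≤ 2 ^ (T+1) * v := Nat.mul_le_mul_left _ hv0
  omega

lemma lt_pow_big {v T : ℕ} (hv0 : 0 < v) : 2 * T < 2 ^ (2*T+1) * v := by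
  have h1 : 2*T + 1 < 2 ^ (2*T+1) := Nat.lt_two_pow_self
  have h2 : 2 ^ (2*T+1) * 1 ≤ 2 ^ (2*T+1) * v := Nat.mul_le_mul_left _ hv0
  omega

theorem splitM_mergeM (T : ℕ) (o : Multiset ℕ) (ho : ∀ p ∈ o, Odd p)
    (hle : ∀ p ∈ o, p ≤ 2*T) : splitM (mergeM T o) = o := by
  have hmpos : ∀ p ∈ mergeM T o, 0 < p := fun p hp => (mem_mergeM_bound hp).1
  have hmle : ∀ p ∈ mergeM T o, p ≤ 2*T := fun p hp => (mem_mergeM_bound hp).2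
  ext v
  by_cases hodd : Odd v
  case neg =>
    rw [Multiset.count_eq_zero.2, Multiset.count_eq_zero.2]
    · intro hvo; exact hodd (ho v hvo)
    · intro hvs
      obtain ⟨p, hp, rfl⟩ := mem_splitM hvs
      exact hodd (oc_odd (Nat.pos_iff_ne_zero.1 (hmpos p hp)))
  case pos =>
  have hv0 : 0 < v := hodd.pos
  by_cases hv2T : 2*T < v
  case pos =>
    rw [count_splitM _ hodd 0 (fun p hp => by have := hmle p hp; simpa using by omega),
      Multiset.count_eq_zero.2 (fun hvo => by have := hle v hvo; omega)]
    simp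
  case neg =>
  push_neg at hv2T
  obtain ⟨a, haT, hlo⟩ : ∃ a, T < 2 ^ a * v ∧ ∀ i < a, 2 ^ i * v ≤ T := by
    have hex := exists_thresh T hv0
    refine ⟨Nat.find hex, Nat.find_spec hex, fun i hi => ?_⟩
    have := Nat.find_min hex hi
    omega
  have hbig : ∀ p ∈ mergeM T o, p < 2 ^ (2*T+1) * v := fun p hp => by
    have h1 := hmle p hp
    have h2 := lt_pow_big (v := v) (T := T) hv0
    omega
  rw [count_splitM _ hodd (2*T+1) hbig]
  set c := o.count v with hc
  have h2a : 2 ^ a * v ≤ 2 * T := by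
    match a, haT, hlo with
    | 0, haT, hlo => simpa using hv2T
    | (i+1), haT, hlo =>
      have h3 := hlo i (Nat.lt_succ_self i)
      have h4 : 2 ^ (i+1) * v = 2 * (2 ^ i * v) := by ring
      omega
  have haK : a < 2*T+1 := by
    have h2 : 2 ^ a ≤ 2 ^ a * v := Nat.le_mul_of_pos_right _ hv0
    have h3 : a < 2 ^ a := Nat.lt_two_pow_self
    omega
  have hmc : ∀ i, mergeCount T o (2 ^ i * v)
      = if i < a then (c / 2 ^ i) % 2 else if i = a then c / 2 ^ a else 0 := by
    intro i
    have hne : 2 ^ i * v ≠ 0 := by positivity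
    rw [mergeCount, if_neg hne, oc_pow_mul i hodd, v2_pow_mul i hodd, ← hc]
    rcases lt_trichotomy i a with h | rfl | h
    · rw [if_pos (hlo i h), if_pos h]
    · rw [if_neg (by omega), if_pos h2a, if_neg (by omega), if_pos rfl]
    · have hgt : 2 * T < 2 ^ i * v := by
        have h1 : 2 ^ (a+1) * v ≤ 2 ^ i * v :=
          Nat.mul_le_mul_right v (Nat.pow_le_pow_right (by norm_num) h)
        have h4 : 2 ^ (a+1) * v = 2 * (2 ^ a * v) := by ring
        omega
      rw [if_neg (by omega), if_neg (by omega), if_neg (by omega), if_neg (by omega)]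
  calc ∑ i ∈ Finset.range (2*T+1), 2 ^ i * (mergeM T o).count (2 ^ i * v)
      = ∑ i ∈ Finset.range (2*T+1),
          2 ^ i * (if i < a then (c / 2 ^ i) % 2 else if i = a then c / 2 ^ a else 0) := by
        refine Finset.sum_congr rfl fun i _ => ?_
        rw [count_mergeM, hmc i]
    _ = c := by
        rw [Finset.range_eq_Ico, ← Finset.sum_Ico_consecutive _ (Nat.zero_le (a+1)) haK,
          ← Finset.range_eq_Ico, Finset.sum_range_succ]
        have e1 : ∑ i ∈ Finset.range a,
            2 ^ i * (if i < a then (c / 2 ^ i) % 2 else if i = a then c / 2 ^ a else 0)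
            = c % 2 ^ a := by
          rw [← sum_bits a c]
          exact Finset.sum_congr rfl fun i hi => by
            rw [if_pos (Finset.mem_range.1 hi)]
        have e2 : ∑ i ∈ Finset.Ico (a+1) (2*T+1),
            2 ^ i * (if i < a then (c / 2 ^ i) % 2 else if i = a then c / 2 ^ a else 0)
            = 0 := by
          refine Finset.sum_eq_zero fun i hi => ?_
          have := Finset.mem_Ico.1 hi
          rw [if_neg (by omega), if_neg (by omega), Nat.mul_zero]
        rw [e1, e2, if_neg (by omega), if_pos rfl, Nat.add_zero, Nat.mod_add_div]

lemma sum_digits_lt (a : ℕ) (n : ℕ → ℕ) (hn : ∀ i < a, n i ≤ 1) :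
    ∑ i ∈ Finset.range a, 2 ^ i * n i < 2 ^ a := by
  induction a with
  | zero => simp
  | succ a ih =>
    have h1 := ih (fun i hi => hn i (by omega))
    have h2 := hn a (by omega)
    have h3 : (2:ℕ) ^ (a+1) = 2 * 2 ^ a := by ring
    rw [Finset.sum_range_succ]
    have h4 : 2 ^ a * n a ≤ 2 ^ a * 1 := Nat.mul_le_mul_left _ h2
    omega

lemma key_div (a : ℕ) (n : ℕ → ℕ) (hn : ∀ i < a, n i ≤ 1) (na : ℕ) :
    ((∑ i ∈ Finset.range a, 2 ^ i * n i) + 2 ^ a * na) / 2 ^ a = na := by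
  rw [Nat.add_mul_div_left _ _ (by positivity : (0:ℕ) < 2 ^ a),
    Nat.div_eq_of_lt (sum_digits_lt a n hn)]
  omega

lemma key_bit (a : ℕ) (n : ℕ → ℕ) (hn : ∀ i < a, n i ≤ 1) (na : ℕ) {b : ℕ} (hb : b < a) :
    ((∑ i ∈ Finset.range a, 2 ^ i * n i) + 2 ^ a * na) / 2 ^ b % 2 = n b := by
  have hsplit : ∑ i ∈ Finset.range a, 2 ^ i * n i
      = (∑ i ∈ Finset.range b, 2 ^ i * n i) + 2 ^ b * n b
        + ∑ i ∈ Finset.Ico (b+1) a, 2 ^ i * n i := by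
    rw [Finset.range_eq_Ico, ← Finset.sum_Ico_consecutive _ (Nat.zero_le (b+1)) hb,
      ← Finset.range_eq_Ico, Finset.sum_range_succ]
  obtain ⟨y, hy⟩ : (2:ℕ) ^ (b+1) ∣ (∑ i ∈ Finset.Ico (b+1) a, 2 ^ i * n i) + 2 ^ a * na := by
    refine Nat.dvd_add (Finset.dvd_sum fun i hi => ?_) ?_
    · exact Dvd.dvd.mul_right (pow_dvd_pow 2 (Finset.mem_Ico.1 hi).1) _
    · exact Dvd.dvd.mul_right (pow_dvd_pow 2 hb) _
  have hc : (∑ i ∈ Finset.range a, 2 ^ i * n i) + 2 ^ a * na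
      = (∑ i ∈ Finset.range b, 2 ^ i * n i) + 2 ^ b * (n b + 2 * y) := by
    rw [hsplit]
    have h5 : (2:ℕ) ^ (b+1) * y = 2 ^ b * (2 * y) := by ring
    have h6 : (2:ℕ) ^ b * (n b + 2 * y) = 2 ^ b * n b + 2 ^ b * (2 * y) := by ring
    omega
  rw [hc, Nat.add_mul_div_left _ _ (by positivity : (0:ℕ) < 2 ^ b),
    Nat.div_eq_of_lt (sum_digits_lt b n (fun i hi => hn i (by omega)))]
  have := hn b hb
  omega

theorem mergeM_splitM (T : ℕ) (s : Multiset ℕ) (hpos : ∀ p ∈ s, 0 < p)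
    (hle : ∀ p ∈ s, p ≤ 2*T) (hdist : ∀ b ≤ T, s.count b ≤ 1) :
    mergeM T (splitM s) = s := by
  ext m
  rw [count_mergeM]
  rcases Nat.eq_zero_or_pos m with rfl | hm0
  · rw [mergeCount, if_pos rfl, eq_comm, Multiset.count_eq_zero]
    intro h
    exact absurd (hpos 0 h) (by omega)
  by_cases hm2T : 2*T < m
  · rw [mergeCount, if_neg (by omega), if_neg (by omega), if_neg (by omega), eq_comm,
      Multiset.count_eq_zero]
    intro h
    exact absurd (hle m h) (by omega)
  push_neg at hm2T
  set v := oc m with hv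
  set b := v2 m with hb
  have hm0' : m ≠ 0 := by omega
  have hodd : Odd v := oc_odd hm0'
  have hv0 : 0 < v := hodd.pos
  have hbv : 2 ^ b * v = m := pow_v2_mul_oc hm0'
  have hvm : v ≤ m := oc_le m
  have hbig : ∀ p ∈ s, p < 2 ^ (2*T+1) * v := fun p hp => by
    have h1 := hle p hp
    have h2 := lt_pow_big (v := v) (T := T) hv0
    omega
  obtain ⟨a, haT, hlo⟩ : ∃ a, T < 2 ^ a * v ∧ ∀ i < a, 2 ^ i * v ≤ T := by
    have hex := exists_thresh T hv0
    refine ⟨Nat.find hex, Nat.find_spec hex, fun i hi => ?_⟩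
    have := Nat.find_min hex hi
    omega
  have h2a : 2 ^ a * v ≤ 2 * T := by
    match a, haT, hlo with
    | 0, haT, hlo => simpa using by omega
    | (i+1), haT, hlo =>
      have h3 := hlo i (Nat.lt_succ_self i)
      have h4 : 2 ^ (i+1) * v = 2 * (2 ^ i * v) := by ring
      omega
  have haK : a < 2*T+1 := by
    have h2 : 2 ^ a ≤ 2 ^ a * v := Nat.le_mul_of_pos_right _ hv0
    have h3 : a < 2 ^ a := Nat.lt_two_pow_self
    omega
  set n : ℕ → ℕ := fun i => s.count (2 ^ i * v) with hn
  have hsmall : ∀ i < a, n i ≤ 1 := fun i hi => hdist _ (hlo i hi)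
  have hzero : ∀ i, a < i → n i = 0 := fun i hi => by
    rw [hn, Multiset.count_eq_zero]
    intro hmem
    have h1 := hle _ hmem
    have h2 : 2 ^ (a+1) * v ≤ 2 ^ i * v :=
      Nat.mul_le_mul_right v (Nat.pow_le_pow_right (by norm_num) hi)
    have h3 : 2 ^ (a+1) * v = 2 * (2 ^ a * v) := by ring
    omega
  have hcval : (splitM s).count v = (∑ i ∈ Finset.range a, 2 ^ i * n i) + 2 ^ a * n a := by
    rw [count_splitM s hodd (2*T+1) hbig]
    rw [Finset.range_eq_Ico, ← Finset.sum_Ico_consecutive _ (Nat.zero_le (a+1)) haK,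
      ← Finset.range_eq_Ico, Finset.sum_range_succ]
    have e2 : ∑ i ∈ Finset.Ico (a+1) (2*T+1), 2 ^ i * s.count (2 ^ i * v) = 0 :=
      Finset.sum_eq_zero fun i hi => by
        have h := hzero i (Finset.mem_Ico.1 hi).1
        simp only [hn] at h
        rw [h, Nat.mul_zero]
    rw [e2, Nat.add_zero]
  by_cases hmT : m ≤ T
  · have hba : b < a := by
      by_contra hcon
      push_neg at hcon
      have : 2 ^ a * v ≤ 2 ^ b * v :=
        Nat.mul_le_mul_right v (Nat.pow_le_pow_right (by norm_num) hcon)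
      omega
    rw [mergeCount, if_neg hm0', if_pos hmT, ← hv, ← hb, hcval,
      key_bit a n hsmall (n a) hba, hn]
    simp only []
    rw [hbv]
  · push_neg at hmT
    have hba : b = a := by
      have h1 : a ≤ b := by
        by_contra hcon
        push_neg at hcon
        have := hlo b hcon
        omega
      have h2 : b < a + 1 := by
        by_contra hcon
        push_neg at hcon
        have h3 : 2 ^ (a+1) * v ≤ 2 ^ b * v :=
          Nat.mul_le_mul_right v (Nat.pow_le_pow_right (by norm_num) hcon)
        have h4 : 2 ^ (a+1) * v = 2 * (2 ^ a * v) := by ring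
        omega
      omega
    rw [mergeCount, if_neg hm0', if_neg (by omega), if_pos (by omega), ← hv, ← hb, hcval,
      hba, key_div a n hsmall (n a), hn]
    simp only []
    rw [← hba, hbv]

lemma sup_mem {s : Multiset ℕ} (h : s ≠ 0) : s.sup ∈ s := by
  induction s using Multiset.induction with
  | empty => simp at h
  | cons a t ih =>
    rw [Multiset.sup_cons]
    rcases eq_or_ne t 0 with rfl | ht
    · simp
    · rcases le_total t.sup a with hle | hle
      · rw [sup_eq_left.2 hle]; exact Multiset.mem_cons_self a t
      · rw [sup_eq_right.2 hle]; exact Multiset.mem_cons_of_mem (ih ht)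

lemma count_mul_le_sum (s : Multiset ℕ) (v : ℕ) : s.count v * v ≤ s.sum := by
  have h1 : Multiset.replicate (s.count v) v ≤ s := Multiset.le_count_iff_replicate_le.1 le_rfl
  obtain ⟨u, hu⟩ := Multiset.le_iff_exists_add.1 h1
  have h2 := congrArg Multiset.sum hu
  rw [Multiset.sum_add, Multiset.sum_replicate, smul_eq_mul] at h2
  omega

lemma mem_mergeM_le_sum {T : ℕ} {o : Multiset ℕ} {m : ℕ} (h : m ∈ mergeM T o) :
    m ≤ o.sum := by
  rw [← Multiset.count_pos, count_mergeM] at h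
  have hm0 : m ≠ 0 := by
    rintro rfl
    rw [mergeCount, if_pos rfl] at h
    omega
  have hdiv : o.count (oc m) / 2 ^ v2 m ≠ 0 := by
    intro hz
    rw [mergeCount, if_neg hm0, hz] at h
    simp at h
  have hc : 2 ^ v2 m ≤ o.count (oc m) := by
    rw [Nat.one_le_iff_ne_zero.symm, Nat.le_div_iff_mul_le (by positivity : 0 < 2 ^ v2 m)] at hdiv
    omega
  have h2 : 2 ^ v2 m * oc m ≤ o.count (oc m) * oc m := Nat.mul_le_mul_right _ hc
  rw [pow_v2_mul_oc hm0] at h2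
  exact le_trans h2 (count_mul_le_sum o (oc m))

lemma sum_mergeM (T : ℕ) (o : Multiset ℕ) (ho : ∀ p ∈ o, Odd p)
    (hle : ∀ p ∈ o, p ≤ 2*T) : (mergeM T o).sum = o.sum := by
  have h1 := splitM_mergeM T o ho hle
  have h2 := sum_splitM (mergeM T o) (fun p hp => (mem_mergeM_bound hp).1)
  rw [h1] at h2
  omega

lemma count_mergeM_le_one {T : ℕ} (o : Multiset ℕ) {b : ℕ} (hb : b ≤ T) :
    (mergeM T o).count b ≤ 1 := by
  rw [count_mergeM, mergeCount]
  split_ifs <;> omega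

/-! ### The two partition transforms -/

/-- distinct → odd -/
def fAO (s : Multiset ℕ) : Multiset ℕ := splitM s
/-- odd → distinct (for odd partitions of `n`, with threshold `n`) -/
def gAO (n : ℕ) (o : Multiset ℕ) : Multiset ℕ := mergeM n o
/-- odd partition of `n` → AKY partition of `n+1` -/
def fOC (o : Multiset ℕ) : Multiset ℕ := (o.sup + 1) ::ₘ mergeM ((o.sup + 1)/2) (o.erase o.sup)
/-- AKY partition of `n+1` → odd partition of `n` -/
def gOC (s : Multiset ℕ) : Multiset ℕ := (s.sup - 1) ::ₘ splitM (s.erase s.sup)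

section props

lemma fAO_prop {n : ℕ} {s : Multiset ℕ} (h1 : s.sum = n) (h2 : ∀ a ∈ s, 0 < a) :
    (fAO s).sum = n ∧ ∀ a ∈ fAO s, Odd a := by
  refine ⟨by rw [fAO, sum_splitM s h2, h1], fun a ha => ?_⟩
  obtain ⟨p, hp, rfl⟩ := mem_splitM ha
  exact oc_odd (Nat.pos_iff_ne_zero.1 (h2 p hp))

lemma gAO_prop {n : ℕ} {o : Multiset ℕ} (h1 : o.sum = n) (h2 : ∀ a ∈ o, Odd a) :
    (gAO n o).sum = n ∧ (∀ a ∈ gAO n o, 0 < a) ∧ ∀ a, (gAO n o).count a ≤ 1 := by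
  have hle : ∀ p ∈ o, p ≤ 2*n := fun p hp => by
    have := Multiset.le_sum_of_mem hp
    omega
  refine ⟨by rw [gAO, sum_mergeM n o h2 hle, h1], fun a ha => (mem_mergeM_bound ha).1,
    fun a => ?_⟩
  by_cases han : a ≤ n
  · exact count_mergeM_le_one o han
  · rw [gAO, Multiset.count_eq_zero.2]
    · omega
    · intro hmem
      have := mem_mergeM_le_sum hmem
      omega

lemma gAO_fAO {n : ℕ} {s : Multiset ℕ} (h1 : s.sum = n) (h2 : ∀ a ∈ s, 0 < a)
    (h3 : ∀ a, s.count a ≤ 1) : gAO n (fAO s) = s := by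
  have hle : ∀ p ∈ s, p ≤ 2*n := fun p hp => by
    have := Multiset.le_sum_of_mem hp
    omega
  exact mergeM_splitM n s h2 hle (fun b _ => h3 b)

lemma fAO_gAO {n : ℕ} {o : Multiset ℕ} (h1 : o.sum = n) (h2 : ∀ a ∈ o, Odd a) :
    fAO (gAO n o) = o := by
  have hle : ∀ p ∈ o, p ≤ 2*n := fun p hp => by
    have := Multiset.le_sum_of_mem hp
    omega
  exact splitM_mergeM n o h2 hle

lemma fOC_prop {n : ℕ} (hn : 0 < n) {o : Multiset ℕ} (h1 : o.sum = n) (h2 : ∀ a ∈ o, Odd a) :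
    (fOC o).sum = n + 1 ∧ (∀ a ∈ fOC o, 0 < a) ∧
      ∃ j : ℕ, 2 * j ∈ fOC o ∧ (∀ b ∈ fOC o, b ≤ 2 * j) ∧
        ∀ b ∈ fOC o, b ≤ j → (fOC o).count b ≤ 1 := by
  have hne : o ≠ 0 := by rintro rfl; simp at h1; omega
  have hM : o.sup ∈ o := sup_mem hne
  set M := o.sup with hMdef
  have hModd : Odd M := h2 M hM
  have hMpos : 0 < M := hModd.pos
  set j := (M + 1)/2 with hj
  have h2j : 2 * j = M + 1 := by
    obtain ⟨k, hk⟩ := hModd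
    omega
  have hjpos : 0 < j := by omega
  have herode : ∀ p ∈ o.erase M, Odd p := fun p hp => h2 p (Multiset.mem_of_mem_erase hp)
  have herle : ∀ p ∈ o.erase M, p ≤ 2*j := fun p hp => by
    have := Multiset.le_sup (Multiset.mem_of_mem_erase hp)
    omega
  have hsum : M + (o.erase M).sum = n := by
    rw [← Multiset.sum_cons, Multiset.cons_erase hM, h1]
  refine ⟨?_, ?_, j, ?_, ?_, ?_⟩
  · rw [fOC, Multiset.sum_cons, ← hMdef, ← hj, sum_mergeM j _ herode herle]
    omega
  · intro a ha
    rcases Multiset.mem_cons.1 ha with rfl | ha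
    · omega
    · exact (mem_mergeM_bound ha).1
  · rw [fOC, ← hMdef, ← hj, h2j]
    exact Multiset.mem_cons_self _ _
  · intro b hb
    rcases Multiset.mem_cons.1 hb with rfl | hb
    · omega
    · have := (mem_mergeM_bound hb).2
      omega
  · intro b _ hbj
    rw [fOC, ← hMdef, ← hj, Multiset.count_cons, if_neg (by omega)]
    simpa using count_mergeM_le_one _ hbj

lemma gOC_prop {n : ℕ} {s : Multiset ℕ} (h1 : s.sum = n + 1) (h2 : ∀ a ∈ s, 0 < a)
    {j : ℕ} (hjm : 2 * j ∈ s) (hjb : ∀ b ∈ s, b ≤ 2 * j) :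
    (gOC s).sum = n ∧ ∀ a ∈ gOC s, Odd a := by
  have hsup : s.sup = 2 * j := le_antisymm (Multiset.sup_le.2 hjb) (Multiset.le_sup hjm)
  have hjpos : 0 < j := by
    have := h2 _ hjm
    omega
  have herpos : ∀ p ∈ s.erase (2*j), 0 < p := fun p hp => h2 p (Multiset.mem_of_mem_erase hp)
  have hsum : 2*j + (s.erase (2*j)).sum = n + 1 := by
    rw [← Multiset.sum_cons, Multiset.cons_erase hjm, h1]
  constructor
  · rw [gOC, Multiset.sum_cons, hsup, sum_splitM _ herpos]
    omega
  · intro a ha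
    rw [gOC, hsup] at ha
    rcases Multiset.mem_cons.1 ha with rfl | ha
    · exact ⟨j - 1, by omega⟩
    · obtain ⟨p, hp, rfl⟩ := mem_splitM ha
      exact oc_odd (Nat.pos_iff_ne_zero.1 (herpos p hp))

lemma gOC_fOC {n : ℕ} (hn : 0 < n) {o : Multiset ℕ} (h1 : o.sum = n) (h2 : ∀ a ∈ o, Odd a) :
    gOC (fOC o) = o := by
  have hne : o ≠ 0 := by rintro rfl; simp at h1; omega
  have hM : o.sup ∈ o := sup_mem hne
  set M := o.sup with hMdef
  have hModd : Odd M := h2 M hM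
  have hMpos : 0 < M := hModd.pos
  set j := (M + 1)/2 with hj
  have h2j : 2 * j = M + 1 := by
    obtain ⟨k, hk⟩ := hModd
    omega
  have hjpos : 0 < j := by omega
  have herode : ∀ p ∈ o.erase M, Odd p := fun p hp => h2 p (Multiset.mem_of_mem_erase hp)
  have herle : ∀ p ∈ o.erase M, p ≤ 2*j := fun p hp => by
    have := Multiset.le_sup (Multiset.mem_of_mem_erase hp)
    omega
  have hsupf : (fOC o).sup = M + 1 := by
    refine le_antisymm (Multiset.sup_le.2 fun b hb => ?_) ?_
    · rw [fOC, ← hMdef, ← hj] at hb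
      rcases Multiset.mem_cons.1 hb with rfl | hb
      · omega
      · have := (mem_mergeM_bound hb).2
        omega
    · exact Multiset.le_sup (by rw [fOC, ← hMdef, ← hj]; exact Multiset.mem_cons_self _ _)
  rw [gOC, hsupf]
  have herase : (fOC o).erase (M + 1) = mergeM j (o.erase M) := by
    rw [fOC, ← hMdef, ← hj, Multiset.erase_cons_head]
  rw [herase, splitM_mergeM j _ herode herle]
  have : M + 1 - 1 = M := by omega
  rw [this, Multiset.cons_erase hM]

lemma fOC_gOC {n : ℕ} {s : Multiset ℕ} (h1 : s.sum = n + 1) (h2 : ∀ a ∈ s, 0 < a)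
    {j : ℕ} (hjm : 2 * j ∈ s) (hjb : ∀ b ∈ s, b ≤ 2 * j)
    (hjd : ∀ b ∈ s, b ≤ j → s.count b ≤ 1) : fOC (gOC s) = s := by
  have hsup : s.sup = 2 * j := le_antisymm (Multiset.sup_le.2 hjb) (Multiset.le_sup hjm)
  have hjpos : 0 < j := by
    have := h2 _ hjm
    omega
  have herpos : ∀ p ∈ s.erase (2*j), 0 < p := fun p hp => h2 p (Multiset.mem_of_mem_erase hp)
  have herle : ∀ p ∈ s.erase (2*j), p ≤ 2*j := fun p hp =>
    hjb p (Multiset.mem_of_mem_erase hp)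
  have herdist : ∀ b ≤ j, (s.erase (2*j)).count b ≤ 1 := fun b hb => by
    by_cases hbs : b ∈ s
    · exact le_trans (Multiset.count_le_of_le b (Multiset.erase_le _ s)) (hjd b hbs hb)
    · rw [Multiset.count_eq_zero.2 (fun hmem => hbs (Multiset.mem_of_mem_erase hmem))]
      omega
  have hsupg : (gOC s).sup = 2*j - 1 := by
    refine le_antisymm (Multiset.sup_le.2 fun b hb => ?_) ?_
    · rw [gOC, hsup] at hb
      rcases Multiset.mem_cons.1 hb with rfl | hb
      · omega
      · obtain ⟨p, hp, rfl⟩ := mem_splitM hb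
        have hple := le_trans (oc_le p) (herle p hp)
        have hodd := oc_odd (Nat.pos_iff_ne_zero.1 (herpos p hp))
        obtain ⟨k, hk⟩ := hodd
        omega
    · refine Multiset.le_sup ?_
      rw [gOC, hsup]
      exact Multiset.mem_cons_self _ _
  rw [fOC, hsupg]
  have h2j1 : 2*j - 1 + 1 = 2*j := by omega
  have hj2 : (2*j)/2 = j := by omega
  have herase : (gOC s).erase (2*j - 1) = splitM (s.erase (2*j)) := by
    rw [gOC, hsup]
    exact Multiset.erase_cons_head _ _
  rw [herase, h2j1, hj2, mergeM_splitM j _ herpos herle herdist, Multiset.cons_erase hjm]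

end props

/-- Distinct partitions of `n` are equinumerous with odd partitions of `n`. -/
def equivAO (n : ℕ) :
    {s : Multiset ℕ // s.sum = n ∧ (∀ a ∈ s, 0 < a) ∧ ∀ a, s.count a ≤ 1} ≃
    {s : Multiset ℕ // s.sum = n ∧ ∀ a ∈ s, Odd a} where
  toFun x := ⟨fAO x.1, fAO_prop x.2.1 x.2.2.1⟩
  invFun x := ⟨gAO n x.1, gAO_prop x.2.1 x.2.2⟩
  left_inv x := Subtype.ext (gAO_fAO x.2.1 x.2.2.1 x.2.2.2)
  right_inv x := Subtype.ext (fAO_gAO x.2.1 x.2.2)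

/-- Odd partitions of `n` (for `n ≥ 1`) are equinumerous with the AKY `C`-partitions
of `n+1`. -/
def equivOC (n : ℕ) (hn : 0 < n) :
    {s : Multiset ℕ // s.sum = n ∧ ∀ a ∈ s, Odd a} ≃
    {s : Multiset ℕ // s.sum = n + 1 ∧ (∀ a ∈ s, 0 < a) ∧
      ∃ j : ℕ, 2 * j ∈ s ∧ (∀ b ∈ s, b ≤ 2 * j) ∧ ∀ b ∈ s, b ≤ j → s.count b ≤ 1} where
  toFun x := ⟨fOC x.1, fOC_prop hn x.2.1 x.2.2⟩
  invFun x := ⟨gOC x.1, by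
    obtain ⟨j, hjm, hjb, hjd⟩ := x.2.2.2
    exact gOC_prop x.2.1 x.2.2.1 hjm hjb⟩
  left_inv x := Subtype.ext (gOC_fOC hn x.2.1 x.2.2)
  right_inv x := by
    obtain ⟨j, hjm, hjb, hjd⟩ := x.2.2.2
    exact Subtype.ext (fOC_gOC x.2.1 x.2.2.1 hjm hjb hjd)

end AKY



theorem AKY_A_eq_C (n : ℕ) (hn : 0 < n) :
    Nat.card {s : Multiset ℕ // s.sum = n ∧ (∀ a ∈ s, 0 < a) ∧ ∀ a, s.count a ≤ 1} =
    Nat.card {s : Multiset ℕ // s.sum = n + 1 ∧ (∀ a ∈ s, 0 < a) ∧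
      ∃ j : ℕ, 2 * j ∈ s ∧ (∀ b ∈ s, b ≤ 2 * j) ∧ ∀ b ∈ s, b ≤ j → s.count b ≤ 1} :=
  Nat.card_congr ((AKY.equivAO n).trans (AKY.equivOC n hn))
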